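/- The relation ≤_tt1 is transitive: for all f₁, f₂, f₃ : 2^ω → ℝ, if f₁ ≤_tt1 f₂ and f₂ ≤_tt1 f₃, then f₁ ≤_tt1 f₃. -/

import Mathlib

/-- Cantor space `2^ω`. -/
abbrev Cantor : Type := ℕ → Bool

/-- A bit `b` is a correct answer to the question `f A ≲_ε p`. -/
def CorrectAnswer (f : Cantor → ℝ) (A : Cantor) (p ε : ℚ) (b : Bool) : Prop :=
  (b = true ∧ f A < (p : ℝ) + (ε : ℝ)) ∨ (b = false ∧ (p : ℝ) - (ε : ℝ) < f A)

/-- Topological `tt1`-reducibility: one oracle question about `g`, together with the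
first `r` bits of the input, determine the answer via a truth table. -/
def TT1Reducible (f g : Cantor → ℝ) : Prop :=
  ∀ p ε : ℚ, 0 < ε → ∃ (k : Cantor → Cantor) (q δ : ℚ) (r : ℕ)
    (h : (Fin r → Bool) → Bool → Bool),
    Continuous k ∧ 0 < δ ∧
    ∀ (A : Cantor) (b : Bool), CorrectAnswer g (k A) q δ b →
      CorrectAnswer f A p ε (h (fun i : Fin r => A i) b)

/-- A continuous function from Cantor space to a discrete finite power of `Bool`
has a uniform modulus of continuity. -/
lemma exists_modulus {r : ℕ} (F : Cantor → (Fin r → Bool)) (hF : Continuous F) :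
    ∃ M : ℕ, ∀ A B : Cantor, (∀ i < M, A i = B i) → F A = F B := by
  have h1 : ∀ A : Cantor, ∃ m : ℕ, ∀ B, (∀ i < m, B i = A i) → F B = F A := by
    intro A
    have ho : IsOpen (F ⁻¹' {F A}) := (isOpen_discrete _).preimage hF
    rw [isOpen_pi_iff] at ho
    obtain ⟨I, u, hu, hsub⟩ := ho A rfl
    refine ⟨I.sup id + 1, fun B hB => ?_⟩
    have hBmem : B ∈ (I : Set ℕ).pi u := by
      intro i hi
      have : B i = A i := hB i (Nat.lt_succ_of_le (Finset.le_sup (f := id) hi))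
      rw [this]
      exact (hu i hi).2
    exact hsub hBmem
  choose m hm using h1
  have hopen : ∀ A : Cantor, IsOpen {B : Cantor | ∀ i < m A, B i = A i} := by
    intro A
    have : {B : Cantor | ∀ i < m A, B i = A i}
        = ⋂ i ∈ Finset.range (m A), (fun B : Cantor => B i) ⁻¹' {A i} := by
      ext B; simp [Finset.mem_range]
    rw [this]
    exact isOpen_biInter_finset fun i _ =>
      (isOpen_discrete _).preimage (continuous_apply i)
  have hcov : (Set.univ : Set Cantor) ⊆ ⋃ A : Cantor, {B : Cantor | ∀ i < m A, B i = A i} :=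
    fun A _ => Set.mem_iUnion.2 ⟨A, fun _ _ => rfl⟩
  obtain ⟨t, ht⟩ := isCompact_univ.elim_finite_subcover _ hopen hcov
  refine ⟨t.sup m, fun A B hAB => ?_⟩
  obtain ⟨C, hCt, hAC⟩ : ∃ C ∈ t, ∀ i < m C, A i = C i := by
    have := ht (Set.mem_univ A)
    simpa using this
  have hmC : m C ≤ t.sup m := Finset.le_sup hCt
  have hBC : ∀ i < m C, B i = C i := fun i hi =>
    ((hAB i (lt_of_lt_of_le hi hmC)).symm.trans (hAC i hi))
  rw [hm C A hAC, hm C B hBC]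

/-- The relation `≤_tt1` is transitive. -/
theorem tt1Reducible_trans (f₁ f₂ f₃ : Cantor → ℝ) (h₁₂ : TT1Reducible f₁ f₂)
    (h₂₃ : TT1Reducible f₂ f₃) : TT1Reducible f₁ f₃ := by
  intro p ε hε
  obtain ⟨k, q, δ, r, h, hk, hδ, hcorr⟩ := h₁₂ p ε hε
  obtain ⟨k', q', δ', r', h', hk', hδ', hcorr'⟩ := h₂₃ q δ hδ
  obtain ⟨M, hM⟩ := exists_modulus (fun A => fun i : Fin r' => k A i)
    (continuous_pi fun i => (continuous_apply i.1).comp hk)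
  set R := max r M with hR
  refine ⟨k' ∘ k, q', δ', R,
    fun v b => h (fun i => v ⟨i.1, lt_of_lt_of_le i.2 (le_max_left r M)⟩)
      (h' (fun i : Fin r' => k (fun n => if hn : n < R then v ⟨n, hn⟩ else false) i) b),
    hk'.comp hk, hδ', ?_⟩
  intro A b hb
  have h2 : CorrectAnswer f₂ (k A) q δ (h' (fun i : Fin r' => k A i) b) :=
    hcorr' (k A) b hb
  have hE : (fun i : Fin r' => k (fun n => decide (n < R) && A n) i)
      = fun i : Fin r' => k A i := by
    apply hM
    intro i hi
    simp [show i < R from lt_of_lt_of_le hi (le_max_right r M)]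
  simpa [hE] using hcorr A _ h2
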